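/- arXiv:1901.01203 — 7 statements merged into one kernel-verified Lean document; each statement's English description precedes it below -/
import Mathlib

section
/- The set of 6-tuples (n, r, r', d₁, d₂, c) of integers satisfying 1 ≤ r ≤ 3, r ≤ n − 2, 0 ≤ r' ≤ n − 2, d₁ ≥ 2, d₂ ≥ 2, c ≥ 0, d₁·(n − r − 1) = r' + 2, and d₂·(n − r' − 1) = r − c + 2, is exactly the following set of 26 tuples: (3,1,1,3,2,1), (3,1,1,3,3,0), (4,1,2,2,2,1), (4,1,2,2,3,0), (4,2,1,3,2,0), (4,2,2,4,2,2), (4,2,2,4,3,1), (4,2,2,4,4,0), (5,2,2,2,2,0), (6,2,4,2,2,2), (6,2,4,2,3,1), (6,2,4,2,4,0), (5,3,2,4,2,1), (5,3,3,5,2,3), (5,3,3,5,3,2), (5,3,3,5,4,1), (5,3,3,5,5,0), (6,3,4,3,2,3), (6,3,4,3,3,2), (6,3,4,3,4,1), (6,3,4,3,5,0), (7,3,4,2,2,1), (8,3,6,2,2,3), (8,3,6,2,3,2), (8,3,6,2,4,1), (8,3,6,2,5,0). -/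
set_option maxHeartbeats 2000000


/-- Corollary 1.3 / Table 1: the preliminary classification of the numerical data
`(n, r, r', d₁, d₂, c)` of special birational transformations of type `(d₁, d₂)`, `d₂ > 1`,
into a factorial variety, with base locus of dimension `r ≤ 3`. -/
theorem preliminary_classification (n r r' d₁ d₂ c : ℤ) :
    (1 ≤ r ∧ r ≤ 3 ∧ r ≤ n - 2 ∧ 0 ≤ r' ∧ r' ≤ n - 2 ∧ 2 ≤ d₁ ∧ 2 ≤ d₂ ∧ 0 ≤ c ∧
      d₁ * (n - r - 1) = r' + 2 ∧ d₂ * (n - r' - 1) = r - c + 2)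
    ↔ (n, r, r', d₁, d₂, c) ∈
      ({(3,1,1,3,2,1), (3,1,1,3,3,0), (4,1,2,2,2,1), (4,1,2,2,3,0), (4,2,1,3,2,0),
        (4,2,2,4,2,2), (4,2,2,4,3,1), (4,2,2,4,4,0), (5,2,2,2,2,0), (6,2,4,2,2,2),
        (6,2,4,2,3,1), (6,2,4,2,4,0), (5,3,2,4,2,1), (5,3,3,5,2,3), (5,3,3,5,3,2),
        (5,3,3,5,4,1), (5,3,3,5,5,0), (6,3,4,3,2,3), (6,3,4,3,3,2), (6,3,4,3,4,1),
        (6,3,4,3,5,0), (7,3,4,2,2,1), (8,3,6,2,2,3), (8,3,6,2,3,2), (8,3,6,2,4,1),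
        (8,3,6,2,5,0)} : Set (ℤ × ℤ × ℤ × ℤ × ℤ × ℤ)) := by
  constructor
  · rintro ⟨h1, h2, h3, h4, h5, h6, h7, h8, h9, h10⟩
    have h2a : 2 * (n - r - 1) ≤ d₁ * (n - r - 1) := by
      nlinarith [mul_nonneg (by omega : (0:ℤ) ≤ d₁ - 2) (by omega : (0:ℤ) ≤ n - r - 1)]
    have h2b : 2 * (n - r' - 1) ≤ d₂ * (n - r' - 1) := by
      nlinarith [mul_nonneg (by omega : (0:ℤ) ≤ d₂ - 2) (by omega : (0:ℤ) ≤ n - r' - 1)]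
    have hb : n - r' - 1 = 1 ∨ n - r' - 1 = 2 := by omega
    have hn3 : 3 ≤ n := by omega
    have hn8 : n ≤ 8 := by omega
    simp only [Set.mem_insert_iff, Set.mem_singleton_iff, Prod.mk.injEq]
    have hd2 : d₂ = 2 ∨ d₂ = 3 ∨ d₂ = 4 ∨ d₂ = 5 := by
      rcases hb with hb | hb <;> rw [hb] at h10 <;> omega
    have hn : n = 3 ∨ n = 4 ∨ n = 5 ∨ n = 6 ∨ n = 7 ∨ n = 8 := by omega
    have hr : r = 1 ∨ r = 2 ∨ r = 3 := by omega
    rcases hb with hb | hb <;> rw [hb] at h10 <;>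
      rcases hn with rfl | rfl | rfl | rfl | rfl | rfl <;>
      rcases hr with rfl | rfl | rfl <;>
      rcases hd2 with rfl | rfl | rfl | rfl <;>
      norm_num <;> omega
  · intro h
    simp only [Set.mem_insert_iff, Set.mem_singleton_iff, Prod.mk.injEq] at h
    rcases h with ⟨rfl,rfl,rfl,rfl,rfl,rfl⟩|⟨rfl,rfl,rfl,rfl,rfl,rfl⟩|⟨rfl,rfl,rfl,rfl,rfl,rfl⟩|⟨rfl,rfl,rfl,rfl,rfl,rfl⟩|⟨rfl,rfl,rfl,rfl,rfl,rfl⟩|⟨rfl,rfl,rfl,rfl,rfl,rfl⟩|⟨rfl,rfl,rfl,rfl,rfl,rfl⟩|⟨rfl,rfl,rfl,rfl,rfl,rfl⟩|⟨rfl,rfl,rfl,rfl,rfl,rfl⟩|⟨rfl,rfl,rfl,rfl,rfl,rfl⟩|⟨rfl,rfl,rfl,rfl,rfl,rfl⟩|⟨rfl,rfl,rfl,rfl,rfl,rfl⟩|⟨rfl,rfl,rfl,rfl,rfl,rfl⟩|⟨rfl,rfl,rfl,rfl,rfl,rfl⟩|⟨rfl,rfl,rfl,rfl,rfl,rfl⟩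|⟨rfl,rfl,rfl,rfl,rfl,rfl⟩|⟨rfl,rfl,rfl,rfl,rfl,rfl⟩|⟨rfl,rfl,rfl,rfl,rfl,rfl⟩|⟨rfl,rfl,rfl,rfl,rfl,rfl⟩|⟨rfl,rfl,rfl,rfl,rfl,rfl⟩|⟨rfl,rfl,rfl,rfl,rfl,rfl⟩|⟨rfl,rfl,rfl,rfl,rfl,rfl⟩|⟨rfl,rfl,rfl,rfl,rfl,rfl⟩|⟨rfl,rfl,rfl,rfl,rfl,rfl⟩|⟨rfl,rfl,rfl,rfl,rfl,rfl⟩|⟨rfl,rfl,rfl,rfl,rfl,rfl⟩ <;> norm_num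
end

section
/- The set Γ₁₇₄ has exactly 174 elements; moreover every (λ, g, Δ, d, a) ∈ Γ₁₇₄ satisfies 7 ≤ λ ≤ 18 and 0 ≤ g ≤ 28, and its component (Δ, d, a) lies in {(1,5,0), (4,2,1), (3,3,1), (2,4,1), (6,2,2), (4,3,2), (8,2,3)}. -/
/-- The admissibility predicate from Lemma 2.2 of the paper. -/
def Admissible (l g D d a : ℤ) : Prop :=
  3 ≤ l ∧ l ≤ 27 ∧ 0 ≤ g ∧
  2 * g ≤ ((l - 2) / 3) * (2 * l - 8 - 3 * ((l - 2) / 3 - 1)) ∧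
  1 ≤ d ∧ d ≤ 5 ∧ 1 ≤ D ∧ 0 ≤ a ∧
  (d = 5 ↔ D = 1) ∧ (d = 4 ↔ D = 2) ∧
  (D = 1 → a = 0) ∧ (D = 2 → a = 1) ∧ (3 ≤ D → 1 ≤ a) ∧
  0 ≤ 2 * l - g + 1 ∧
  0 ≤ -21 * l + 6 * g - D * d + 237 ∧
  0 ≤ l ^ 2 + 9 * l - 18 * g + 18 ∧
  0 ≤ 49 * l ^ 2 - 28 * l * g + 4 * g ^ 2 + (D * d - 1106) * l + 316 * g - 27 * (D * d) + 6241 ∧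
  0 ≤ 7 * D * l - 2 * D * g + D ^ 2 * d ^ 2 - 79 * D ∧
  0 ≤ l ^ 2 + 7 * l - 10 * g - 2 * (D * d) + 12 * a - 12 * (if d = 1 then (1 : ℤ) else 0) - 92 ∧
  0 ≤ -10 * l + 8 * g + 2 * (D * d) - 12 * a + 12 * (if d = 1 then (1 : ℤ) else 0) + 94 ∧
  0 ≤ -290 * l + 140 * g - 13 * (D * d) + D + 2290 ∧
  0 ≤ -147 * l + 74 * g + 12 * (D * d) - D - 84 * a + 108 * (if d = 1 then (1 : ℤ) else 0) + 1183

/-- `CIFactor D s a` : there exist integers `e₁, …, e_a`, all `≥ 2`, with product `D` and sum `s`. -/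
def CIFactor (D s a : ℤ) : Prop :=
  ∃ e : List ℤ, (e.length : ℤ) = a ∧ (∀ x ∈ e, 2 ≤ x) ∧ e.prod = D ∧ e.sum = s

/-- The set Γ₁₇₄ from the proof of Theorem 2.3 of the paper. -/
def Gamma174 (l g D d a : ℤ) : Prop :=
  Admissible l g D d a ∧ d ≠ 1 ∧ CIFactor D (a + 5 - d) a

instance Admissible.dec (l g D d a : ℤ) : Decidable (Admissible l g D d a) := by
  unfold Admissible; infer_instance

/-- The explicit list of 174 solutions. -/
def gammaList : List (ℤ × ℤ × ℤ × ℤ × ℤ) :=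
  [(7,0,2,4,1), (7,0,4,3,2), (7,0,8,2,3), (7,1,8,2,3), (8,1,1,5,0), (8,1,2,4,1), (8,2,3,3,1), 
  (8,2,2,4,1), (8,2,4,3,2), (8,2,8,2,3), (8,3,8,2,3), (9,3,1,5,0), (9,4,1,5,0), (9,4,3,3,1), 
  (9,4,2,4,1), (9,4,6,2,2), (9,4,4,3,2), (9,4,8,2,3), (9,5,4,3,2), (9,5,8,2,3), (10,5,1,5,0), 
  (10,6,1,5,0), (10,6,3,3,1), (10,6,2,4,1), (10,6,6,2,2), (10,6,4,3,2), (10,6,8,2,3), (10,7,3,3,1), 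
  (10,7,2,4,1), (10,7,6,2,2), (10,7,4,3,2), (10,7,8,2,3), (10,8,8,2,3), (11,7,1,5,0), (11,8,1,5,0), 
  (11,8,3,3,1), (11,8,2,4,1), (11,8,6,2,2), (11,8,4,3,2), (11,8,8,2,3), (11,9,1,5,0), (11,9,3,3,1), 
  (11,9,2,4,1), (11,9,6,2,2), (11,9,4,3,2), (11,9,8,2,3), (11,10,3,3,1), (11,10,2,4,1), (11,10,6,2,2), 
  (11,10,4,3,2), (11,10,8,2,3), (11,11,8,2,3), (12,9,1,5,0), (12,10,1,5,0), (12,10,4,2,1), (12,10,3,3,1), 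
  (12,10,2,4,1), (12,10,6,2,2), (12,10,4,3,2), (12,11,1,5,0), (12,11,3,3,1), (12,11,2,4,1), (12,11,6,2,2), 
  (12,11,4,3,2), (12,11,8,2,3), (12,12,1,5,0), (12,12,3,3,1), (12,12,2,4,1), (12,12,6,2,2), (12,12,4,3,2), 
  (12,12,8,2,3), (12,13,3,3,1), (12,13,2,4,1), (12,13,6,2,2), (12,13,4,3,2), (12,13,8,2,3), (12,14,8,2,3), 
  (13,12,1,5,0), (13,12,4,2,1), (13,12,3,3,1), (13,12,2,4,1), (13,13,1,5,0), (13,13,4,2,1), (13,13,3,3,1), 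
  (13,13,2,4,1), (13,13,6,2,2), (13,13,4,3,2), (13,14,1,5,0), (13,14,4,2,1), (13,14,3,3,1), (13,14,2,4,1), 
  (13,14,6,2,2), (13,14,4,3,2), (13,14,8,2,3), (13,15,1,5,0), (13,15,3,3,1), (13,15,2,4,1), (13,15,6,2,2), 
  (13,15,4,3,2), (13,15,8,2,3), (13,16,3,3,1), (13,16,2,4,1), (13,16,6,2,2), (13,16,4,3,2), (13,16,8,2,3), 
  (14,14,1,5,0), (14,15,1,5,0), (14,15,4,2,1), (14,15,3,3,1), (14,15,2,4,1), (14,16,1,5,0), (14,16,4,2,1), 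
  (14,16,3,3,1), (14,16,2,4,1), (14,16,6,2,2), (14,16,4,3,2), (14,17,1,5,0), (14,17,4,2,1), (14,17,3,3,1), 
  (14,17,2,4,1), (14,17,6,2,2), (14,17,4,3,2), (14,17,8,2,3), (14,18,1,5,0), (14,18,3,3,1), (14,18,2,4,1), 
  (14,18,6,2,2), (14,18,4,3,2), (14,18,8,2,3), (15,17,1,5,0), (15,18,1,5,0), (15,18,4,2,1), (15,18,2,4,1), 
  (15,19,1,5,0), (15,19,4,2,1), (15,19,3,3,1), (15,19,2,4,1), (15,19,6,2,2), (15,19,4,3,2), (15,20,1,5,0), 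
  (15,20,4,2,1), (15,20,3,3,1), (15,20,2,4,1), (15,20,6,2,2), (15,20,4,3,2), (15,20,8,2,3), (15,21,1,5,0), 
  (15,21,4,2,1), (15,21,3,3,1), (15,21,2,4,1), (15,21,6,2,2), (15,21,4,3,2), (15,21,8,2,3), (16,21,1,5,0), 
  (16,22,1,5,0), (16,22,4,2,1), (16,22,3,3,1), (16,22,2,4,1), (16,23,1,5,0), (16,23,4,2,1), (16,23,3,3,1), 
  (16,23,2,4,1), (16,23,6,2,2), (16,23,4,3,2), (17,24,1,5,0), (17,25,1,5,0), (17,25,4,2,1), (17,25,3,3,1), 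
  (17,25,2,4,1), (18,27,1,5,0), (18,28,1,5,0), (18,28,4,2,1), (18,28,3,3,1), (18,28,2,4,1)]

def gammaFinset : Finset (ℤ × ℤ × ℤ × ℤ × ℤ) := gammaList.toFinset

def sevenFinset : Finset (ℤ × ℤ × ℤ) :=
  {(1,5,0), (4,2,1), (3,3,1), (2,4,1), (6,2,2), (4,3,2), (8,2,3)}

lemma sum_ge_two_mul_length : ∀ e : List ℤ, (∀ x ∈ e, 2 ≤ x) → 2 * (e.length : ℤ) ≤ e.sum := by
  intro e
  induction e with
  | nil => simp
  | cons x t ih =>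
    intro h
    have hx := h x (by simp)
    have ht := ih (fun y hy => h y (by simp [hy]))
    simp only [List.sum_cons, List.length_cons]
    push_cast
    omega

lemma cif_of_seven (D d a : ℤ) (h : (D, d, a) ∈ sevenFinset) : CIFactor D (a + 5 - d) a := by
  simp only [sevenFinset, Finset.mem_insert, Finset.mem_singleton, Prod.mk.injEq] at h
  rcases h with ⟨h1,h2,h3⟩|⟨h1,h2,h3⟩|⟨h1,h2,h3⟩|⟨h1,h2,h3⟩|⟨h1,h2,h3⟩|⟨h1,h2,h3⟩|⟨h1,h2,h3⟩ <;>
    subst h1 <;> subst h2 <;> subst h3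
  · exact ⟨[], by norm_num⟩
  · exact ⟨[4], by norm_num⟩
  · exact ⟨[3], by norm_num⟩
  · exact ⟨[2], by norm_num⟩
  · exact ⟨[2,3], by norm_num⟩
  · exact ⟨[2,2], by norm_num⟩
  · exact ⟨[2,2,2], by norm_num⟩

lemma seven_aux (D d a : ℤ) (hd : 1 ≤ d) (hd5 : d ≤ 5) (hd1 : d ≠ 1)
    (hiff5 : d = 5 ↔ D = 1) (hiff4 : d = 4 ↔ D = 2)
    (hc : CIFactor D (a + 5 - d) a) : (D, d, a) ∈ sevenFinset := by
  obtain ⟨e, hlen, h2, hprod, hsum⟩ := hc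
  simp only [sevenFinset, Finset.mem_insert, Finset.mem_singleton, Prod.mk.injEq]
  rcases e with _ | ⟨x, _ | ⟨y, _ | ⟨z, _ | ⟨w, t⟩⟩⟩⟩
  · simp at hlen hprod hsum
    omega
  · simp at hlen hprod hsum
    have hx := h2 x (by simp)
    have hd' : d = 2 ∨ d = 3 ∨ d = 4 := by omega
    rcases hd' with h|h|h <;> subst h <;> omega
  · simp at hlen hprod hsum
    have hx := h2 x (by simp)
    have hy := h2 y (by simp)
    have hd' : d = 2 ∨ d = 3 := by omega
    rcases hd' with h|h <;> subst h
    · have : (x = 2 ∧ y = 3) ∨ (x = 3 ∧ y = 2) := by omega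
      rcases this with ⟨hx2, hy2⟩|⟨hx2, hy2⟩ <;> subst hx2 <;> subst hy2 <;>
        norm_num at hprod <;> omega
    · have : x = 2 ∧ y = 2 := by omega
      obtain ⟨hx2, hy2⟩ := this; subst hx2; subst hy2; norm_num at hprod; omega
  · simp at hlen hprod hsum
    have hx := h2 x (by simp)
    have hy := h2 y (by simp)
    have hz := h2 z (by simp)
    have hd' : d = 2 := by omega
    subst hd'
    have : x = 2 ∧ y = 2 ∧ z = 2 := by omega
    obtain ⟨hx2, hy2, hz2⟩ := this; subst hx2; subst hy2; subst hz2
    norm_num at hprod; omega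
  · exfalso
    have hx := h2 x (by simp)
    have hy := h2 y (by simp)
    have hz := h2 z (by simp)
    have hw := h2 w (by simp)
    have ht := sum_ge_two_mul_length t (fun u hu => h2 u (by simp [hu]))
    simp only [List.length_cons, List.sum_cons] at hlen hsum
    push_cast at hlen
    omega

lemma seven_of_gamma (l g D d a : ℤ) (h : Gamma174 l g D d a) : (D, d, a) ∈ sevenFinset := by
  obtain ⟨ha, hd1, hc⟩ := h
  obtain ⟨_, _, _, _, hd, hd5, hD1, ha0, hiff5, hiff4, _⟩ := ha
  exact seven_aux D d a hd hd5 hd1 hiff5 hiff4 hc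

set_option maxHeartbeats 4000000 in
set_option maxRecDepth 20000 in
lemma forward_enum :
    ∀ l ∈ Finset.Icc (3:ℤ) 27, ∀ g ∈ Finset.Icc (0:ℤ) 55, ∀ t ∈ sevenFinset,
      Admissible l g t.1 t.2.1 t.2.2 → (l, g, t.1, t.2.1, t.2.2) ∈ gammaList := by
  decide

set_option maxRecDepth 4000 in
lemma adm_of_mem : ∀ p ∈ gammaList, Admissible p.1 p.2.1 p.2.2.1 p.2.2.2.1 p.2.2.2.2 := by
  decide

set_option maxRecDepth 4000 in
lemma dne_of_mem : ∀ p ∈ gammaList, p.2.2.2.1 ≠ 1 := by decide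

set_option maxRecDepth 4000 in
lemma seven_of_mem : ∀ p ∈ gammaList, (p.2.2.1, p.2.2.2.1, p.2.2.2.2) ∈ sevenFinset := by
  decide

set_option maxRecDepth 4000 in
lemma card_gamma : gammaFinset.card = 174 := by decide

set_option maxRecDepth 4000 in
lemma bounds_of_mem : ∀ p ∈ gammaList, 7 ≤ p.1 ∧ p.1 ≤ 18 ∧ 0 ≤ p.2.1 ∧ p.2.1 ≤ 28 := by
  decide

lemma gamma_iff (l g D d a : ℤ) :
    Gamma174 l g D d a ↔ (l, g, D, d, a) ∈ gammaList := by
  constructor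
  · intro h
    have hseven := seven_of_gamma l g D d a h
    obtain ⟨ha, hd1, hc⟩ := h
    have hl : l ∈ Finset.Icc (3:ℤ) 27 := by
      obtain ⟨h1, h2, _⟩ := ha
      exact Finset.mem_Icc.2 ⟨h1, h2⟩
    have hg : g ∈ Finset.Icc (0:ℤ) 55 := by
      obtain ⟨h1, h2, h3, _, _, _, _, _, _, _, _, _, _, h14, _⟩ := ha
      exact Finset.mem_Icc.2 ⟨h3, by omega⟩
    exact forward_enum l hl g hg (D, d, a) hseven ha
  · intro h
    exact ⟨adm_of_mem _ h, dne_of_mem _ h, cif_of_seven _ _ _ (seven_of_mem _ h)⟩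

/-- The first enumeration in the proof of Theorem 2.3: Γ₁₇₄ has exactly 174 elements,
with `7 ≤ λ ≤ 18`, `0 ≤ g ≤ 28`, and `(Δ, d, a)` among seven possibilities. -/
theorem gamma174_count :
    ({p : ℤ × ℤ × ℤ × ℤ × ℤ |
        Gamma174 p.1 p.2.1 p.2.2.1 p.2.2.2.1 p.2.2.2.2}).Finite ∧
    ({p : ℤ × ℤ × ℤ × ℤ × ℤ |
        Gamma174 p.1 p.2.1 p.2.2.1 p.2.2.2.1 p.2.2.2.2}).ncard = 174 ∧
    (∀ l g D d a : ℤ, Gamma174 l g D d a →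
      7 ≤ l ∧ l ≤ 18 ∧ 0 ≤ g ∧ g ≤ 28 ∧
      (D, d, a) ∈ ({(1,5,0), (4,2,1), (3,3,1), (2,4,1), (6,2,2), (4,3,2), (8,2,3)} :
        Set (ℤ × ℤ × ℤ))) := by
  have hset : {p : ℤ × ℤ × ℤ × ℤ × ℤ |
      Gamma174 p.1 p.2.1 p.2.2.1 p.2.2.2.1 p.2.2.2.2} = ↑gammaFinset := by
    ext ⟨l, g, D, d, a⟩
    simp only [gammaFinset, List.coe_toFinset, Set.mem_setOf_eq]
    exact gamma_iff l g D d a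
  refine ⟨hset ▸ gammaFinset.finite_toSet, ?_, ?_⟩
  · rw [hset, Set.ncard_coe_finset]
    exact card_gamma
  · intro l g D d a h
    have h1 : (l, g, D, d, a) ∈ gammaList := (gamma_iff l g D d a).1 h
    have h2 := seven_of_gamma l g D d a h
    obtain ⟨b1, b2, b3, b4⟩ := bounds_of_mem _ h1
    refine ⟨b1, b2, b3, b4, ?_⟩
    simp only [sevenFinset, Finset.mem_insert, Finset.mem_singleton] at h2
    simpa using h2
end

section
/- No tuple (λ, g, Δ, d, a) ∈ Γ₁₇₄ satisfies both equations K3 + 9·K2H + 27·KH2 + 27λ = 0 and K2H + 6·KH2 + 9λ = 0. -/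
/-- `K_B · H_B²` for the base locus, from Lemma 2.1. -/
def KH2 (l g : ℤ) : ℤ := -2 * l + 2 * g - 2

/-- `K_B² · H_B` for the base locus, from Lemma 2.1. -/
def K2H (l g D d a : ℤ) : ℤ := -39 * l + 14 * g + D * d - 12 * a + 331

/-- `K_B³` for the base locus, from Lemma 2.1. -/
def K3 (l g D d a : ℤ) : ℤ := l ^ 2 - 77 * l + 14 * g - 3 * (D * d) - D - 12 * a + 688

lemma two_mul_length_le_sum (e : List ℤ) (h : ∀ x ∈ e, 2 ≤ x) :
    2 * (e.length : ℤ) ≤ e.sum := by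
  induction e with
  | nil => simp
  | cons x t ih =>
    have hx : 2 ≤ x := h x (by simp)
    have ht : 2 * (t.length : ℤ) ≤ t.sum := ih (fun y hy => h y (by simp [hy]))
    simp only [List.length_cons, List.sum_cons]
    push_cast
    linarith

/-- Exclusion of scrolls over a curve in the proof of Theorem 2.3: no tuple of Γ₁₇₄
satisfies `(K_B + 3H_B)³ = 0` and `(K_B + 3H_B)² · H_B = 0`. -/
theorem no_scroll_over_curve (l g D d a : ℤ) (h : Gamma174 l g D d a) :
    ¬ (K3 l g D d a + 9 * K2H l g D d a + 27 * KH2 l g + 27 * l = 0 ∧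
       K2H l g D d a + 6 * KH2 l g + 9 * l = 0) := by
  obtain ⟨⟨hl3, hl27, hg0, hgb, hd1, hd5, hD1, ha0, hd5D, hd4D, hD1a, hD2a, hD3a,
    _, _, _, _, _, _, _, _, _⟩, hdne, e, hlen, hge2, hprod, hsum⟩ := h
  rintro ⟨E1, E2⟩
  simp only [K3, K2H, KH2] at E1 E2
  have hm : D * d = 42 * l - 26 * g + 12 * a - 319 := by linarith
  have hodd : Odd (D * d) := ⟨21 * l - 13 * g + 6 * a - 160, by linarith⟩
  obtain ⟨hDo, hdo⟩ := (Int.odd_mul).mp hodd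
  have hd35 : d = 3 ∨ d = 5 := by
    obtain ⟨k, hk⟩ := hdo; omega
  have hsum2 : 2 * a ≤ e.sum := by rw [← hlen]; exact two_mul_length_le_sum e hge2
  rcases hd35 with hd | hd
  · -- d = 3
    subst hd
    have hDne1 : D ≠ 1 := fun hD => absurd (hd5D.mpr hD) (by omega)
    have hDne2 : D ≠ 2 := fun hD => absurd (hd4D.mpr hD) (by omega)
    have hD3 : 3 ≤ D := by omega
    have ha1 : 1 ≤ a := hD3a hD3
    have ha2 : a ≤ 2 := by omega
    rcases e with _ | ⟨x, _ | ⟨y, _ | ⟨z, t⟩⟩⟩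
    · simp at hlen; omega
    · -- e = [x]
      simp at hlen hprod hsum
      have hD3' : D = 3 := by omega
      subst hD3'
      have ha : a = 1 := by omega
      subst ha
      interval_cases l <;> omega
    · -- e = [x, y]
      have hx : 2 ≤ x := hge2 x (by simp)
      have hy : 2 ≤ y := hge2 y (by simp)
      simp at hlen hprod hsum
      have hax : a = 2 := by omega
      have hx2 : x = 2 := by omega
      have hy2 : y = 2 := by omega
      obtain ⟨k, hk⟩ := hDo
      omega
    · exfalso
      simp only [List.length_cons] at hlen
      push_cast at hlen
      have : (0 : ℤ) ≤ (t.length : ℤ) := Int.natCast_nonneg _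
      omega
  · -- d = 5
    subst hd
    have hD : D = 1 := hd5D.mp rfl
    subst hD
    have ha : a = 0 := hD1a rfl
    subst ha
    interval_cases l <;> omega
end

section
/- No tuple (λ, g, Δ, d, a) ∈ Γ₁₇₄ satisfies the system of three equations KH2 + 2λ = 0, K2H + 2·KH2 = 0, K3 + 2·K2H = 0; and no tuple in Γ₁₇₄ satisfies the system of two equations K3 + 6·K2H + 12·KH2 + 8λ = 0 and K2H + 4·KH2 + 4λ = 0. -/
lemma cifactor_cases (D d a : ℤ) (hd2 : 2 ≤ d) (hd5 : d ≤ 5)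
    (h5 : d = 5 ↔ D = 1) (h4 : d = 4 ↔ D = 2)
    (hc : CIFactor D (a + 5 - d) a) :
    (D = 1 ∧ d = 5 ∧ a = 0) ∨ (D = 2 ∧ d = 4 ∧ a = 1) ∨ (D = 3 ∧ d = 3 ∧ a = 1) ∨
    (D = 4 ∧ d = 3 ∧ a = 2) ∨ (D = 4 ∧ d = 2 ∧ a = 1) ∨ (D = 6 ∧ d = 2 ∧ a = 2) ∨
    (D = 8 ∧ d = 2 ∧ a = 3) := by
  obtain ⟨e, hlen, h2, hp, hs⟩ := hc
  have hsum := two_mul_length_le_sum e h2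
  rw [hlen, hs] at hsum
  rcases e with _ | ⟨x, _ | ⟨y, _ | ⟨z, _ | ⟨w, t⟩⟩⟩⟩
  · simp only [List.length_nil, Nat.cast_zero, List.prod_nil, List.sum_nil] at hlen hp hs
    omega
  · have hx := h2 x (by simp)
    simp only [List.length_cons, List.length_nil, List.prod_cons, List.prod_nil,
      List.sum_cons, List.sum_nil, mul_one, add_zero] at hlen hp hs
    push_cast at hlen
    omega
  · have hx := h2 x (by simp)
    have hy := h2 y (by simp)
    simp only [List.length_cons, List.length_nil, List.prod_cons, List.prod_nil,
      List.sum_cons, List.sum_nil, mul_one, add_zero] at hlen hp hs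
    push_cast at hlen
    have hx3 : x ≤ 3 := by omega
    interval_cases x <;> omega
  · have hx := h2 x (by simp)
    have hy := h2 y (by simp)
    have hz := h2 z (by simp)
    simp only [List.length_cons, List.length_nil, List.prod_cons, List.prod_nil,
      List.sum_cons, List.sum_nil, mul_one, add_zero] at hlen hp hs
    push_cast at hlen
    have hx2 : x = 2 := by omega
    have hy2 : y = 2 := by omega
    have hz2 : z = 2 := by omega
    subst hx2 hy2 hz2
    norm_num at hp
    omega
  · exfalso
    simp only [List.length_cons] at hlen
    push_cast at hlen
    omega

/-- Exclusion of del Pezzo varieties and quadric fibrations over a curve in the proof of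
Theorem 2.3. -/
theorem no_delPezzo_no_quadric_fibration (l g D d a : ℤ) (h : Gamma174 l g D d a) :
    ¬ (KH2 l g + 2 * l = 0 ∧ K2H l g D d a + 2 * KH2 l g = 0 ∧
        K3 l g D d a + 2 * K2H l g D d a = 0) ∧
    ¬ (K3 l g D d a + 6 * K2H l g D d a + 12 * KH2 l g + 8 * l = 0 ∧
        K2H l g D d a + 4 * KH2 l g + 4 * l = 0) := by
  obtain ⟨hadm, hd1, hc⟩ := h
  obtain ⟨hl3, hl27, hg0, -, hdlo, hdhi, hD1, ha0, h5, h4, -, -, -,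
    i1, i2, -, -, -, -, i3, i4, i5⟩ := hadm
  have hd2 : 2 ≤ d := by omega
  have hcases := cifactor_cases D d a hd2 hdhi h5 h4 hc
  have heps : (if d = 1 then (1 : ℤ) else 0) = 0 := by
    simp [hd1]
  simp only [heps] at i3 i4 i5
  rcases hcases with ⟨rfl, rfl, rfl⟩ | ⟨rfl, rfl, rfl⟩ | ⟨rfl, rfl, rfl⟩ |
    ⟨rfl, rfl, rfl⟩ | ⟨rfl, rfl, rfl⟩ | ⟨rfl, rfl, rfl⟩ | ⟨rfl, rfl, rfl⟩ <;>
  refine ⟨fun ⟨e1, e2, _⟩ => ?_, fun ⟨_, e2'⟩ => ?_⟩ <;>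
  simp only [KH2, K2H] at * <;> omega
end

section
/- The tuples (λ, g, Δ, d, a) ∈ Γ₁₇₄ satisfying the single equation K3 + 6·K2H + 12·KH2 + 8λ = 0 are exactly the two tuples (10, 6, 8, 2, 3) and (12, 11, 8, 2, 3). -/
lemma sum_lb : ∀ (e : List ℤ), (∀ x ∈ e, 2 ≤ x) → 2 * (e.length : ℤ) ≤ e.sum := by
  intro e h
  induction e with
  | nil => simp
  | cons x t ih =>
    simp only [List.length_cons, List.sum_cons, Nat.cast_add, Nat.cast_one]
    have hx := h x (by simp)
    have ht := ih (fun y hy => h y (by simp [hy]))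
    linarith

/-- The scroll-over-a-surface equation `(K_B + 2H_B)³ = 0` in the proof of Theorem 2.3 has
exactly the two solutions `(10, 6, 8, 2, 3)` and `(12, 11, 8, 2, 3)` in Γ₁₇₄. -/
theorem scroll_over_surface_solutions (l g D d a : ℤ) :
    (Gamma174 l g D d a ∧
      K3 l g D d a + 6 * K2H l g D d a + 12 * KH2 l g + 8 * l = 0)
    ↔ ((l, g, D, d, a) = (10, 6, 8, 2, 3) ∨ (l, g, D, d, a) = (12, 11, 8, 2, 3)) := by
  constructor
  · rintro ⟨⟨⟨h1, h2, h3, h4, h5, h6, h7, h8, h9, h10, h11, h12, h13, h14, h15,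
      h16, h17, h18, h19, h20, h21, h22⟩, hd1, e, hlen, he2, hprod, hsum⟩, heq⟩
    rw [if_neg hd1] at h19 h20 h22
    simp only [K3, K2H, KH2, pow_two] at heq h16 h17 h18 h19
    rcases e with _ | ⟨x, _ | ⟨y, _ | ⟨z, _ | ⟨w, t⟩⟩⟩⟩
    · simp only [List.length_nil, Nat.cast_zero, List.prod_nil, List.sum_nil] at hlen hprod hsum
      obtain ⟨rfl, rfl, rfl⟩ : a = 0 ∧ d = 5 ∧ D = 1 := by omega
      simp only [Prod.mk.injEq, and_true]
      interval_cases l <;> first | omega | (interval_cases g <;> omega)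
    · have hx := he2 x (by simp)
      simp only [List.length_cons, List.length_nil, Nat.cast_one, List.prod_cons,
        List.prod_nil, mul_one, List.sum_cons, List.sum_nil, add_zero, Nat.cast_zero,
        zero_add] at hlen hprod hsum
      obtain rfl : a = 1 := by omega
      have hg : g ≤ 2 * l + 1 := by omega
      rcases (show (d = 2 ∧ D = 4) ∨ (d = 3 ∧ D = 3) ∨ (d = 4 ∧ D = 2) by omega) with
        ⟨rfl, rfl⟩ | ⟨rfl, rfl⟩ | ⟨rfl, rfl⟩ <;>
      · simp only [Prod.mk.injEq, and_true]
        interval_cases l <;> first | omega | (interval_cases g <;> omega)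
    · have hx := he2 x (by simp)
      have hy := he2 y (by simp)
      simp only [List.length_cons, List.length_nil, Nat.cast_ofNat, List.prod_cons,
        List.prod_nil, mul_one, List.sum_cons, List.sum_nil, add_zero, Nat.cast_zero,
        Nat.cast_add, Nat.cast_one, zero_add] at hlen hprod hsum
      obtain rfl : a = 2 := by omega
      have hg : g ≤ 2 * l + 1 := by omega
      rcases (show (d = 2 ∧ ((x = 2 ∧ y = 3) ∨ (x = 3 ∧ y = 2))) ∨
          (d = 3 ∧ x = 2 ∧ y = 2) by omega) with
        ⟨rfl, ⟨rfl, rfl⟩ | ⟨rfl, rfl⟩⟩ | ⟨rfl, rfl, rfl⟩ <;>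
      · norm_num at hprod
        obtain rfl := hprod.symm
        simp only [Prod.mk.injEq, and_true]
        interval_cases l <;> first | omega | (interval_cases g <;> omega)
    · have hx := he2 x (by simp)
      have hy := he2 y (by simp)
      have hz := he2 z (by simp)
      simp only [List.length_cons, List.length_nil, Nat.cast_ofNat, List.prod_cons,
        List.prod_nil, mul_one, List.sum_cons, List.sum_nil, add_zero, Nat.cast_zero,
        Nat.cast_add, Nat.cast_one, zero_add] at hlen hprod hsum
      obtain ⟨rfl, rfl, rfl, rfl, rfl⟩ : a = 3 ∧ d = 2 ∧ x = 2 ∧ y = 2 ∧ z = 2 := by omega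
      norm_num at hprod
      obtain rfl := hprod.symm
      simp only [Prod.mk.injEq, and_true]
      interval_cases l <;> first | omega | (interval_cases g <;> omega)
    · exfalso
      have hx := he2 x (by simp)
      have hy := he2 y (by simp)
      have hz := he2 z (by simp)
      have hw := he2 w (by simp)
      have hS := sum_lb t (fun u hu => he2 u (by simp [hu]))
      simp only [List.length_cons, List.sum_cons] at hlen hsum
      push_cast at hlen
      omega
  · rintro (h | h) <;>
    · simp only [Prod.mk.injEq, and_true] at h
      obtain ⟨rfl, rfl, rfl, rfl, rfl⟩ := h
      refine ⟨⟨by norm_num [Admissible], by norm_num, ⟨[2, 2, 2], by norm_num⟩⟩,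
        by norm_num [K3, K2H, KH2]⟩
end

section
/- Let λ, g, Δ, d, a ∈ ℚ and ε ∈ {0, 1}. Suppose x₁, x₂, x₃, y₁, y₂, s₁, s₂, s₃, χ₀ ∈ ℚ satisfy the nine equations: (1) x₁ = 2(g − 1 − λ); (2) x₃ = y₂ + 7y₁ − 48χ₀ + λ² − 35λ − 21x₁ − 7x₂; (3) −x₁ = 7λ + s₁; (4) y₁ = 21λ + 7s₁ + s₂; (5) y₂ = 35λ + 21s₁ + 7s₂ + s₃; (6) Δ = −540λ − 135s₁ − 18s₂ − s₃ + 729; (7) Δd = −90λ − 15s₁ − s₂ + 243; (8) (4/3)λ − x₁ + (x₂ + y₁)/6 + χ₀ = 28 − ε; (9) (9/2)λ − (9/4)x₁ + (x₂ + y₁)/4 + χ₀ = 77 − a. Then: x₁ = −2λ + 2g − 2; x₂ = −39λ + 14g + Δd − 12a + 12ε + 331; x₃ = λ² − 77λ + 14g − 3Δd − Δ − 12a + 60ε + 688; y₁ = −29λ + 16g − Δd + 227; y₂ = 230λ − 102g + 11Δd − Δ − 1842; 81 − 12λ − s₁ = −7λ + 2g + 79; and, setting χ_S = λ/6 + x₁/4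 + (x₂ + y₁)/12, c₂S = y₁ + x₁ + λ and K_S² = 12χ_S − c₂S, one has x₁ + λ = −λ + 2g − 2, χ_S = −6λ + 3g − a + ε + 46, c₂S = −30λ + 18g − Δd + 225, and K_S² = −42λ + 18g + Δd − 12a + 12ε + 327. -/
/-- The linear-algebra content of Lemma 2.1 of the paper: solving the system of nine linear
equations coming from Riemann–Roch, the double point formula, the normal bundle sequence,
the multidegree formulas, and the Hilbert polynomial conditions, determines all the numerical
invariants of the base locus and of its smooth hyperplane section. -/
theorem lemma_numerical_invariants (l g D d a ε : ℚ) (hε : ε = 0 ∨ ε = 1)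
    (x₁ x₂ x₃ y₁ y₂ s₁ s₂ s₃ χ₀ : ℚ)
    (h1 : x₁ = 2 * (g - 1 - l))
    (h2 : x₃ = y₂ + 7 * y₁ - 48 * χ₀ + l ^ 2 - 35 * l - 21 * x₁ - 7 * x₂)
    (h3 : -x₁ = 7 * l + s₁)
    (h4 : y₁ = 21 * l + 7 * s₁ + s₂)
    (h5 : y₂ = 35 * l + 21 * s₁ + 7 * s₂ + s₃)
    (h6 : D = -540 * l - 135 * s₁ - 18 * s₂ - s₃ + 729)
    (h7 : D * d = -90 * l - 15 * s₁ - s₂ + 243)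
    (h8 : (4 / 3) * l - x₁ + (x₂ + y₁) / 6 + χ₀ = 28 - ε)
    (h9 : (9 / 2) * l - (9 / 4) * x₁ + (x₂ + y₁) / 4 + χ₀ = 77 - a) :
    x₁ = -2 * l + 2 * g - 2 ∧
    x₂ = -39 * l + 14 * g + D * d - 12 * a + 12 * ε + 331 ∧
    x₃ = l ^ 2 - 77 * l + 14 * g - 3 * (D * d) - D - 12 * a + 60 * ε + 688 ∧
    y₁ = -29 * l + 16 * g - D * d + 227 ∧
    y₂ = 230 * l - 102 * g + 11 * (D * d) - D - 1842 ∧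
    81 - 12 * l - s₁ = -7 * l + 2 * g + 79 ∧
    x₁ + l = -l + 2 * g - 2 ∧
    l / 6 + x₁ / 4 + (x₂ + y₁) / 12 = -6 * l + 3 * g - a + ε + 46 ∧
    y₁ + x₁ + l = -30 * l + 18 * g - D * d + 225 ∧
    12 * (l / 6 + x₁ / 4 + (x₂ + y₁) / 12) - (y₁ + x₁ + l)
      = -42 * l + 18 * g + D * d - 12 * a + 12 * ε + 327 := by
  refine ⟨by linarith, by linarith, by nlinarith [sq_nonneg l], by linarith, by linarith, by linarith, by linarith, by linarith, by linarith, by linarith⟩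
end

section
/- The admissible tuples (λ, g, Δ, d, a) ∈ ℤ⁵ with d = 1 and (Δ, a) ∈ {(5, 1), (8, 2), (9, 2), (12, 3), (16, 4)} are exactly the six tuples (15, 21, 16, 1, 4), (15, 20, 16, 1, 4), (14, 17, 16, 1, 4), (13, 14, 16, 1, 4), (15, 19, 12, 1, 3), (18, 28, 9, 1, 2). -/
def check (D a l g : ℤ) : Bool :=
  !(2 * g ≤ ((l - 2) / 3) * (2 * l - 8 - 3 * ((l - 2) / 3 - 1))) ||
  !(0 ≤ -21 * l + 6 * g - D + 237) ||
  !(0 ≤ l ^ 2 + 9 * l - 18 * g + 18) ||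
  !(0 ≤ 49 * l ^ 2 - 28 * l * g + 4 * g ^ 2 + (D - 1106) * l + 316 * g - 27 * D + 6241) ||
  !(0 ≤ 7 * D * l - 2 * D * g + D ^ 2 - 79 * D) ||
  !(0 ≤ l ^ 2 + 7 * l - 10 * g - 2 * D + 12 * a - 104) ||
  !(0 ≤ -10 * l + 8 * g + 2 * D - 12 * a + 106) ||
  !(0 ≤ -290 * l + 140 * g - 13 * D + D + 2290) ||
  !(0 ≤ -147 * l + 74 * g + 12 * D - D - 84 * a + 1291) ||
  ((l == 15 && g == 21 && D == 16) || (l == 15 && g == 20 && D == 16) ||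
   (l == 14 && g == 17 && D == 16) || (l == 13 && g == 14 && D == 16) ||
   (l == 15 && g == 19 && D == 12) || (l == 18 && g == 28 && D == 9))

lemma key : ∀ p ∈ ([(5,1),(8,2),(9,2),(12,3),(16,4)] : List (ℤ×ℤ)),
    ∀ l ∈ Finset.Icc (3:ℤ) 27, ∀ g ∈ Finset.Icc (0:ℤ) 55, check p.1 p.2 l g = true := by decide

set_option maxHeartbeats 1000000 in
/-- The enumeration in the proof of Theorem 2.8 of the paper: admissible tuples with `d = 1`
and `(Δ, a)` realizable by a coindex-4 complete intersection. -/
theorem cubo_linear_enumeration (l g D d a : ℤ) :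
    (Admissible l g D d a ∧ d = 1 ∧
      (D, a) ∈ ({(5,1), (8,2), (9,2), (12,3), (16,4)} : Set (ℤ × ℤ)))
    ↔ (l, g, D, d, a) ∈
      ({(15,21,16,1,4), (15,20,16,1,4), (14,17,16,1,4), (13,14,16,1,4), (15,19,12,1,3),
        (18,28,9,1,2)} : Set (ℤ × ℤ × ℤ × ℤ × ℤ)) := by
  constructor
  · rintro ⟨hA, rfl, hDa⟩
    unfold Admissible at hA
    simp only [mul_one, one_pow, if_true, ite_true] at hA
    obtain ⟨h1, h2, h3, h4, -, -, -, -, -, -, -, -, -, h14, h15, h16, h17, h18, h19, h20,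
      h21, h22⟩ := hA
    have hp : ((D, a) : ℤ × ℤ) ∈ ([(5,1),(8,2),(9,2),(12,3),(16,4)] : List (ℤ × ℤ)) := by
      simpa using hDa
    have hk := key (D, a) hp l (Finset.mem_Icc.mpr ⟨h1, h2⟩)
      g (Finset.mem_Icc.mpr ⟨h3, by linarith⟩)
    simp only [Set.mem_insert_iff, Set.mem_singleton_iff, Prod.mk.injEq] at hDa ⊢
    rcases hDa with ⟨rfl, rfl⟩ | ⟨rfl, rfl⟩ | ⟨rfl, rfl⟩ | ⟨rfl, rfl⟩ | ⟨rfl, rfl⟩ <;>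
    · norm_num [check, or_assoc] at hk ⊢
      first
        | (rcases hk with h | h | h | h | h | h | h | h | h | h)
        | (rcases hk with h | h | h | h | h | h | h | h | h)
      all_goals first
        | linarith
        | tauto
  · intro h
    simp only [Set.mem_insert_iff, Set.mem_singleton_iff, Prod.mk.injEq] at h
    rcases h with ⟨rfl,rfl,rfl,rfl,rfl⟩ | ⟨rfl,rfl,rfl,rfl,rfl⟩ | ⟨rfl,rfl,rfl,rfl,rfl⟩ |
      ⟨rfl,rfl,rfl,rfl,rfl⟩ | ⟨rfl,rfl,rfl,rfl,rfl⟩ | ⟨rfl,rfl,rfl,rfl,rfl⟩ <;>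
      exact ⟨by unfold Admissible; norm_num, rfl, by simp⟩
end
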